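/- Let m ≥ 0 be an integer and let g: {ζ ∈ ℂ : |ζ| ≤ 1} → ℂ be continuous on the closed unit disc and holomorphic on the open unit disc, such that (conj ζ)^m · g(ζ) ∈ ℝ for every ζ with |ζ| = 1. Then there exist a_0, …, a_{2m} ∈ ℂ with a_{2m−ℓ} = conj(a_ℓ) for all 0 ≤ ℓ ≤ 2m (in particular a_m ∈ ℝ) such that g(ζ) = Σ_{ℓ=0}^{2m} a_ℓ ζ^ℓ for all |ζ| ≤ 1; in particular, g is a polynomial of degree at most 2m and is uniquely determined by the values g(1), g'(1), …, g^{(2m)}(1). -/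

import Mathlib

open ComplexConjugate

noncomputable section

open Complex Metric intervalIntegral in
def four (g : ℂ → ℂ) (k : ℤ) : ℂ :=
  (((2:ℝ) * Real.pi : ℝ) : ℂ)⁻¹ *
    ∫ θ in (0:ℝ)..(2*Real.pi), Complex.exp (-(k : ℂ) * θ * Complex.I) * g (Complex.exp (θ * Complex.I))

open Complex Metric intervalIntegral in
lemma four_vanish (g : ℂ → ℂ)
    (hcont : ContinuousOn g (Metric.closedBall 0 1))
    (hdiff : DifferentiableOn ℂ g (Metric.ball 0 1))
    (k : ℤ) (hk : k < 0) : four g k = 0 := by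
  obtain ⟨n, hn⟩ : ∃ n : ℕ, -(k:ℂ) = n + 1 := by
    refine ⟨(-k-1).toNat, ?_⟩
    have h1 : ((-k-1).toNat : ℤ) = -k-1 := Int.toNat_of_nonneg (by omega)
    have h2 : (((-k-1).toNat : ℤ) : ℂ) = ((-k-1 : ℤ) : ℂ) := by rw [h1]
    push_cast at h2 ⊢
    rw [h2]; ring
  have h0 : (∮ z in C((0:ℂ), 1), z ^ n * g z) = 0 := by
    apply circleIntegral_eq_zero_of_differentiable_on_off_countable zero_le_one
      Set.countable_empty ((continuousOn_pow n).mul hcont)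
    intro z hz
    exact (differentiableAt_pow n).mul
      ((hdiff z hz.1).differentiableAt (isOpen_ball.mem_nhds hz.1))
  have h1 : (∮ z in C((0:ℂ), 1), z ^ n * g z)
      = Complex.I * ∫ θ in (0:ℝ)..(2*Real.pi),
          Complex.exp (-(k : ℂ) * θ * Complex.I) * g (Complex.exp (θ * Complex.I)) := by
    rw [← intervalIntegral.integral_const_mul]
    simp only [circleIntegral, deriv_circleMap, circleMap, smul_eq_mul, Complex.ofReal_one, one_mul, zero_add]
    refine intervalIntegral.integral_congr fun θ _ => ?_
    have : Complex.exp (θ * Complex.I) * Complex.exp (θ * Complex.I) ^ n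
        = Complex.exp (-(k:ℂ) * θ * Complex.I) := by
      rw [← Complex.exp_nat_mul, ← Complex.exp_add]
      congr 1
      rw [show -(k:ℂ) = (n:ℂ)+1 from hn]; ring
    calc Complex.exp (θ * Complex.I) * Complex.I *
          (Complex.exp (θ * Complex.I) ^ n * g (Complex.exp (θ * Complex.I)))
        = Complex.I * ((Complex.exp (θ * Complex.I) * Complex.exp (θ * Complex.I) ^ n) *
            g (Complex.exp (θ * Complex.I))) := by ring
      _ = _ := by rw [this]
  rw [h1] at h0
  have := mul_eq_zero.mp h0
  simp only [Complex.I_ne_zero, false_or] at this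
  simp only [four, neg_mul] at this ⊢
  simp [this]

open Complex Metric intervalIntegral in
lemma four_conj (m : ℕ) (g : ℂ → ℂ)
    (hreal : ∀ ζ : ℂ, ‖ζ‖ = 1 → ((conj ζ) ^ m * g ζ).im = 0)
    (k : ℤ) : conj (four g k) = four g (2 * m - k) := by
  unfold four
  rw [map_mul]
  have hconst : conj ((((2:ℝ) * Real.pi : ℝ) : ℂ)⁻¹) = (((2:ℝ) * Real.pi : ℝ) : ℂ)⁻¹ := by
    rw [map_inv₀, Complex.conj_ofReal]
  rw [hconst]
  congr 1
  have hci : conj (∫ θ in (0:ℝ)..(2*Real.pi), Complex.exp (-(k : ℂ) * θ * Complex.I) * g (Complex.exp (θ * Complex.I)))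
      = ∫ θ in (0:ℝ)..(2*Real.pi), conj (Complex.exp (-(k : ℂ) * θ * Complex.I) * g (Complex.exp (θ * Complex.I))) := by
    simp [intervalIntegral, ← integral_conj]
  rw [hci]
  refine intervalIntegral.integral_congr fun θ _ => ?_
  set z := Complex.exp (θ * Complex.I) with hz
  have hnorm : ‖z‖ = 1 := by
    rw [hz]; exact Complex.norm_exp_ofReal_mul_I θ
  have hcz : conj z = Complex.exp (-(θ:ℂ) * Complex.I) := by
    rw [hz, ← Complex.exp_conj]; congr 1
    simp [Complex.conj_I]
  -- reality: conj (g z) = (conj z)^(2m) * g z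
  have h1 : conj ((conj z) ^ m * g z) = (conj z) ^ m * g z :=
    Complex.conj_eq_iff_im.mpr (hreal z hnorm)
  have hzinv : z * conj z = 1 := by
    rw [Complex.mul_conj]
    norm_cast
    rw [Complex.normSq_eq_norm_sq, hnorm]; norm_num
  have hcg : conj (g z) = (conj z) ^ (2*m) * g z := by
    have h2 : z ^ m * conj (g z) = (conj z) ^ m * g z := by
      calc z ^ m * conj (g z) = conj ((conj z) ^ m * g z) := by
            rw [map_mul, map_pow, Complex.conj_conj]
        _ = (conj z) ^ m * g z := h1
    have h3 : (conj z) ^ m * (z ^ m * conj (g z)) = (conj z)^m * ((conj z) ^ m * g z) := by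
      rw [h2]
    have h4 : (conj z) ^ m * z ^ m = 1 := by
      rw [← mul_pow, mul_comm (conj z) z, hzinv, one_pow]
    calc conj (g z) = ((conj z) ^ m * z ^ m) * conj (g z) := by rw [h4, one_mul]
      _ = (conj z)^m * ((conj z) ^ m * g z) := by rw [← h3]; ring
      _ = (conj z) ^ (2*m) * g z := by rw [two_mul, pow_add]; ring
  rw [map_mul, hcg]
  have hce : conj (Complex.exp (-(k:ℂ) * θ * Complex.I)) = Complex.exp ((k:ℂ) * θ * Complex.I) := by
    rw [← Complex.exp_conj]; congr 1
    simp [Complex.conj_I]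
  rw [hce, hcz, ← Complex.exp_nat_mul]
  rw [show (-(((2 * (m:ℤ) - k : ℤ)):ℂ) * θ * Complex.I)
      = (k:ℂ) * θ * Complex.I + ((2*m : ℕ):ℂ) * (-(θ:ℂ) * Complex.I) by push_cast; ring,
    Complex.exp_add]
  ring

open Complex Metric intervalIntegral in
lemma four_cps (g : ℂ → ℂ) (n : ℕ) (w : ℂ) :
    (cauchyPowerSeries g 0 1 n fun _ => w) = four g n * w ^ n := by
  rw [cauchyPowerSeries_apply]
  simp only [sub_zero, smul_eq_mul]
  have hint : (∮ z in C((0:ℂ), 1), (w / z) ^ n * (z⁻¹ * g z))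
      = Complex.I * (w ^ n * ∫ θ in (0:ℝ)..(2*Real.pi),
          Complex.exp (-(n : ℂ) * θ * Complex.I) * g (Complex.exp (θ * Complex.I))) := by
    rw [← intervalIntegral.integral_const_mul, ← intervalIntegral.integral_const_mul]
    simp only [circleIntegral, deriv_circleMap, circleMap, smul_eq_mul, Complex.ofReal_one,
      one_mul, zero_add]
    refine intervalIntegral.integral_congr fun θ _ => ?_
    have he : Complex.exp ((θ:ℂ) * Complex.I) ≠ 0 := Complex.exp_ne_zero _
    have hpow : (Complex.exp ((θ:ℂ) * Complex.I))⁻¹ ^ n = Complex.exp (-(n:ℂ) * θ * Complex.I) := by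
      rw [← Complex.exp_neg, ← Complex.exp_nat_mul]; ring_nf
    rw [div_eq_mul_inv, mul_pow, hpow]
    rw [show Complex.exp ((θ:ℂ) * Complex.I) * Complex.I *
        (w ^ n * Complex.exp (-(n:ℂ) * θ * Complex.I) *
          ((Complex.exp ((θ:ℂ) * Complex.I))⁻¹ * g (Complex.exp ((θ:ℂ) * Complex.I))))
        = (Complex.exp ((θ:ℂ) * Complex.I) * (Complex.exp ((θ:ℂ) * Complex.I))⁻¹) *
          (Complex.I * (w ^ n * (Complex.exp (-(n:ℂ) * θ * Complex.I) *
            g (Complex.exp ((θ:ℂ) * Complex.I))))) from by ring,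
      mul_inv_cancel₀ he, one_mul]
  rw [hint, four]
  have hI : Complex.I ≠ 0 := Complex.I_ne_zero
  have hpi : (Real.pi : ℂ) ≠ 0 := by
    exact_mod_cast Complex.ofReal_ne_zero.mpr Real.pi_ne_zero
  push_cast
  field_simp

theorem stmt11 (m : ℕ) (g : ℂ → ℂ)
    (hcont : ContinuousOn g (Metric.closedBall 0 1))
    (hdiff : DifferentiableOn ℂ g (Metric.ball 0 1))
    (hreal : ∀ ζ : ℂ, ‖ζ‖ = 1 → ((conj ζ) ^ m * g ζ).im = 0) :
    ∃ p : Polynomial ℂ,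
      p.natDegree ≤ 2 * m ∧
      (∀ ℓ ≤ 2 * m, p.coeff (2 * m - ℓ) = conj (p.coeff ℓ)) ∧
      (p.coeff m).im = 0 ∧
      (∀ ζ ∈ Metric.closedBall (0 : ℂ) 1, g ζ = p.eval ζ) ∧
      (∀ q : Polynomial ℂ, q.natDegree ≤ 2 * m →
        (∀ j ≤ 2 * m,
          ((fun r : Polynomial ℂ => Polynomial.derivative r)^[j] q).eval 1 =
            ((fun r : Polynomial ℂ => Polynomial.derivative r)^[j] p).eval 1) →
        q = p) := by
  classical
  set a : ℕ → ℂ := fun n => four g (n : ℤ) with ha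
  have hconj : ∀ ℓ : ℕ, ℓ ≤ 2 * m → conj (a ℓ) = a (2 * m - ℓ) := by
    intro ℓ hℓ
    have h := four_conj m g hreal (ℓ : ℤ)
    simp only [ha]
    rw [h]
    congr 1
    omega
  have hvanish : ∀ n : ℕ, 2 * m < n → a n = 0 := by
    intro n hn
    have h := four_conj m g hreal (n : ℤ)
    have h0 : four g (2 * (m : ℤ) - (n : ℤ)) = 0 :=
      four_vanish g hcont hdiff _ (by omega)
    have hc : conj (a n) = 0 := by rw [ha]; simp only; rw [h, h0]
    simpa using congrArg conj hc
  set p : Polynomial ℂ :=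
    ∑ ℓ ∈ Finset.range (2 * m + 1), Polynomial.C (a ℓ) * Polynomial.X ^ ℓ with hp
  have hcoeff : ∀ idx : ℕ, p.coeff idx = if idx ≤ 2 * m then a idx else 0 := by
    intro idx
    rw [hp, Polynomial.finset_sum_coeff]
    simp only [Polynomial.coeff_C_mul, Polynomial.coeff_X_pow, mul_ite, mul_one, mul_zero]
    rw [Finset.sum_ite_eq (Finset.range (2 * m + 1)) idx a]
    simp [Nat.lt_succ_iff]
  have hdeg : p.natDegree ≤ 2 * m := by
    rw [Polynomial.natDegree_le_iff_coeff_eq_zero]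
    intro N hN
    rw [hcoeff N, if_neg (by omega)]
  -- power series expansion on the open ball
  have hR : closure (Metric.ball (0:ℂ) ((1:NNReal):ℝ)) ⊆ Metric.closedBall (0:ℂ) 1 := by
    rw [closure_ball (0:ℂ) (by norm_num)]; norm_num
  have hgdc : DiffContOnCl ℂ g (Metric.ball (0:ℂ) ((1:NNReal):ℝ)) :=
    ⟨by simpa using hdiff, hcont.mono hR⟩
  have hps : HasFPowerSeriesOnBall g (cauchyPowerSeries g 0 ((1:NNReal):ℝ)) 0 1 :=
    hgdc.hasFPowerSeriesOnBall one_pos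
  have hball : ∀ ζ ∈ Metric.ball (0:ℂ) 1, g ζ = p.eval ζ := by
    intro ζ hζ
    have hζ' : ζ ∈ EMetric.ball (0:ℂ) ((1:NNReal) : ENNReal) := by
      show ζ ∈ Metric.eball (0:ℂ) ((1:NNReal) : ENNReal)
      rw [Metric.emetric_ball_nnreal]
      simpa using hζ
    have hsum := hps.hasSum hζ'
    simp only [zero_add, NNReal.coe_one] at hsum
    simp only [four_cps] at hsum
    have hsum2 : HasSum (fun n => a n * ζ ^ n) (g ζ) := hsum
    have hfin : HasSum (fun n => a n * ζ ^ n)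
        (∑ n ∈ Finset.range (2 * m + 1), a n * ζ ^ n) := by
      refine hasSum_sum_of_ne_finset_zero ?_
      intro b hb
      rw [Finset.mem_range] at hb
      rw [hvanish b (by omega), zero_mul]
    rw [hsum2.unique hfin, hp]
    simp [Polynomial.eval_finset_sum]
  have hclosed : ∀ ζ ∈ Metric.closedBall (0:ℂ) 1, g ζ = p.eval ζ := by
    have heq : Set.EqOn g (fun ζ => p.eval ζ) (Metric.closedBall (0:ℂ) 1) := by
      refine Set.EqOn.of_subset_closure (fun ζ hζ => hball ζ hζ) hcont
        (p.continuous_aeval.continuousOn) Metric.ball_subset_closedBall ?_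
      rw [closure_ball (0:ℂ) (by norm_num)]
    exact fun ζ hζ => heq hζ
  refine ⟨p, hdeg, ?_, ?_, hclosed, ?_⟩
  · intro ℓ hℓ
    rw [hcoeff, hcoeff, if_pos hℓ, if_pos (by omega), ← hconj ℓ hℓ]
  · have h := hconj m (by omega)
    rw [show 2 * m - m = m from by omega] at h
    rw [hcoeff, if_pos (by omega)]
    exact Complex.conj_eq_iff_im.mp h
  · intro q hq hder
    have hdsub : (q - p).natDegree ≤ 2 * m :=
      le_trans (Polynomial.natDegree_sub_le q p) (max_le hq hdeg)
    have hev : ∀ j ≤ 2 * m, ((Polynomial.derivative (R := ℂ))^[j] (q - p)).eval 1 = 0 := by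
      intro j hj
      rw [Polynomial.iterate_derivative_sub, Polynomial.eval_sub]
      have := hder j hj
      exact sub_eq_zero.mpr this
    have htay : Polynomial.taylor 1 (q - p) = 0 := by
      refine Polynomial.ext fun n => ?_
      rw [Polynomial.taylor_coeff, Polynomial.coeff_zero]
      by_cases hn : n ≤ 2 * m
      · have h1 : ((Nat.factorial n) • Polynomial.hasseDeriv n (q - p))
            = (Polynomial.derivative (R := ℂ))^[n] (q - p) := by
          exact congrFun (Polynomial.factorial_smul_hasseDeriv (k := n)) (q - p)
        have h2 : ((Nat.factorial n) • Polynomial.hasseDeriv n (q - p)).eval 1 = 0 := by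
          rw [h1]; exact hev n hn
        simp only [Polynomial.eval_smul, smul_eq_mul, nsmul_eq_mul, Polynomial.eval_mul,
          Polynomial.eval_natCast] at h2
        have hfac : ((Nat.factorial n) : ℂ) ≠ 0 := by
          exact Nat.cast_ne_zero.mpr (Nat.factorial_ne_zero n)
        exact (mul_eq_zero.mp h2).resolve_left hfac
      · rw [← Polynomial.taylor_coeff (r := (1:ℂ))]
        refine Polynomial.coeff_eq_zero_of_natDegree_lt ?_
        rw [Polynomial.natDegree_taylor]
        omega
    have : q - p = 0 := by
      apply Polynomial.taylor_injective (1:ℂ)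
      rw [htay, map_zero]
    exact sub_eq_zero.mp this
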